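/- Let G be a finite group with an abelian subgroup A of index 2, and suppose there exists x ∈ G with x ∉ A, x^2 ∈ A, x^2 ≠ 1, and x·a·x⁻¹ = a⁻¹ for all a ∈ A (so G is the generalized dicyclic group Dic(A)). If the subgroup A^2 = {a^2 : a ∈ A} of A has order greater than 2, then CD(G) = {A}. -/

import Mathlib

/-- The Chermak-Delgado measure of a subgroup `H` of `G`: `|H| · |C_G(H)|`. -/
noncomputable def cdMeasure (G : Type*) [Group G] (H : Subgroup G) : ℕ :=
  Nat.card H * Nat.card (Subgroup.centralizer (H : Set G))

/-- The Chermak-Delgado lattice of `G`: the set of subgroups whose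
Chermak-Delgado measure is maximal. -/
def CD (G : Type*) [Group G] : Set (Subgroup G) :=
  {H : Subgroup G | ∀ K : Subgroup G, cdMeasure G K ≤ cdMeasure G H}

theorem stmt_10 (G : Type*) [Group G] [Finite G]
    (A : Subgroup G) (hab : IsMulCommutative A) (hiA : A.index = 2)
    (x : G) (hx : x ∉ A) (hx2 : x ^ 2 ∈ A) (hx2' : x ^ 2 ≠ 1)
    (hinv : ∀ a ∈ A, x * a * x⁻¹ = a⁻¹)
    (hsq : 2 < {g : G | ∃ a ∈ A, g = a ^ 2}.ncard) :
    CD G = {A} := by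
  classical
  haveI := hab
  -- conjugation by any element outside A inverts A
  have hconj : ∀ g ∉ A, ∀ b ∈ A, g * b * g⁻¹ = b⁻¹ := by
    intro g hg b hb
    have hgx : g * x⁻¹ ∈ A := by
      rw [Subgroup.mul_mem_iff_of_index_two hiA]
      constructor
      · intro h; exact absurd h hg
      · intro h; exact absurd ((inv_mem_iff).mp h) hx
    calc g * b * g⁻¹ = (g * x⁻¹) * (x * b * x⁻¹) * (g * x⁻¹)⁻¹ := by group
      _ = (g * x⁻¹) * b⁻¹ * (g * x⁻¹)⁻¹ := by rw [hinv b hb]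
      _ = b⁻¹ * (g * x⁻¹) * (g * x⁻¹)⁻¹ := by
          rw [Subgroup.mul_comm_of_mem_isMulCommutative (H := A) hgx (inv_mem hb)]
      _ = b⁻¹ := by group
  haveI hAnormal : A.Normal := by
    constructor
    intro a ha g
    by_cases hg : g ∈ A
    · exact mul_mem (mul_mem hg ha) (inv_mem hg)
    · rw [hconj g hg a ha]; exact inv_mem ha
  -- the squaring homomorphism on A
  let ψ : A →* G := open IsMulCommutative in A.subtype.comp (powMonoidHom 2)
  have hψ : ∀ a : A, ψ a = (a : G) ^ 2 := fun a => rfl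
  -- Omega = elements of A of order dividing 2
  let Om : Subgroup G := ψ.ker.map A.subtype
  have hOm : ∀ g, g ∈ Om ↔ g ∈ A ∧ g ^ 2 = 1 := by
    intro g
    constructor
    · rintro ⟨a, hker, rfl⟩
      refine ⟨a.2, ?_⟩
      have : ψ a = 1 := hker
      rwa [hψ] at this
    · rintro ⟨hgA, hg2⟩
      refine Subgroup.mem_map.mpr ⟨⟨g, hgA⟩, ?_, rfl⟩
      rw [MonoidHom.mem_ker, hψ]
      exact hg2
  set nA := Nat.card A with hnA
  set nO := Nat.card Om with hnO
  set n2 := Nat.card ψ.range with hn2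
  have hcardOm : nO = Nat.card ψ.ker := by
    rw [hnO]
    exact (Nat.card_congr
      (Subgroup.equivMapOfInjective ψ.ker A.subtype A.subtype_injective).toEquiv).symm
  -- cardinality relations
  have hmul : nO * n2 = nA := by
    rw [hcardOm, hn2, hnA, Subgroup.card_eq_card_quotient_mul_card_subgroup ψ.ker,
      Nat.card_congr (QuotientGroup.quotientKerEquivRange ψ).toEquiv, Nat.mul_comm]
  have hrange_set : ((ψ.range : Subgroup G) : Set G) = {g : G | ∃ a ∈ A, g = a ^ 2} := by
    ext g
    constructor
    · rintro ⟨a, rfl⟩; exact ⟨(a : G), a.2, (hψ a).symm ▸ rfl⟩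
    · rintro ⟨a, ha, rfl⟩; exact ⟨⟨a, ha⟩, rfl⟩
  have h3 : 3 ≤ n2 := by
    have h : n2 = {g : G | ∃ a ∈ A, g = a ^ 2}.ncard := by
      rw [hn2, ← hrange_set, ← Nat.card_coe_set_eq]
      rfl
    omega
  have h3O : 3 * nO ≤ nA := by
    calc 3 * nO = nO * 3 := Nat.mul_comm _ _
      _ ≤ nO * n2 := Nat.mul_le_mul_left _ h3
      _ = nA := hmul
  have hOpos : 0 < nO := Nat.card_pos
  have hApos : 0 < nA := Nat.card_pos
  have hGA : Nat.card G = 2 * nA := by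
    rw [hnA, ← A.index_mul_card, hiA]
  -- any subgroup H satisfies |H| ≤ 2 |A ⊓ H|
  have hhalf : ∀ H : Subgroup G, Nat.card H ≤ 2 * Nat.card (A ⊓ H : Subgroup G) := by
    intro H
    have h1 : ((A ⊓ H).subgroupOf H).index * Nat.card ((A ⊓ H).subgroupOf H)
        = Nat.card H := Subgroup.index_mul_card _
    have h2 : ((A ⊓ H).subgroupOf H).index = A.relIndex H := by
      rw [← Subgroup.inf_relIndex_right A H]; rfl
    have h3' : A.relIndex H ∣ 2 := hiA ▸ Subgroup.relIndex_dvd_index_of_normal (H := A) (K := H)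
    have h4 : A.relIndex H ≤ 2 := Nat.le_of_dvd (by norm_num) h3'
    have h5 : Nat.card ((A ⊓ H).subgroupOf H) = Nat.card (A ⊓ H : Subgroup G) :=
      Nat.card_congr (Subgroup.subgroupOfEquivOfLe inf_le_right).toEquiv
    calc Nat.card H = A.relIndex H * Nat.card (A ⊓ H : Subgroup G) := by
          rw [← h1, h2, h5]
      _ ≤ 2 * Nat.card (A ⊓ H : Subgroup G) := Nat.mul_le_mul_right _ h4
  -- there is an element of A whose square is nontrivial
  have hbex : ∃ b ∈ A, b ^ 2 ≠ 1 := by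
    by_contra hcon
    push_neg at hcon
    have : ψ.range = ⊥ := by
      ext g
      simp only [Subgroup.mem_bot]
      constructor
      · rintro ⟨a, rfl⟩; rw [hψ]; exact hcon _ a.2
      · rintro rfl; exact ⟨1, by rw [hψ]; simp⟩
    rw [hn2, this, Subgroup.card_bot] at h3
    omega
  -- the centralizer of A is A
  have hCA : Subgroup.centralizer (A : Set G) = A := by
    apply le_antisymm
    · intro c hc
      by_contra hcA
      obtain ⟨b, hb, hb2⟩ := hbex
      have h1 : c * b * c⁻¹ = b⁻¹ := hconj c hcA b hb
      have h2 : b * c = c * b := Subgroup.mem_centralizer_iff.mp hc b hb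
      have h3' : c * b * c⁻¹ = b := by rw [← h2]; group
      apply hb2
      have hbb : b = b⁻¹ := by rw [← h1, h3']
      rw [pow_two]
      nth_rewrite 1 [hbb]
      exact inv_mul_cancel b
    · intro a ha
      rw [Subgroup.mem_centralizer_iff]
      intro h hh
      exact Subgroup.mul_comm_of_mem_isMulCommutative (H := A) hh ha
  have hcdA : cdMeasure G A = nA * nA := by
    rw [cdMeasure, hCA]
  -- the key strict bound for all other subgroups
  have key : ∀ H : Subgroup G, H ≠ A → cdMeasure G H < nA * nA := by
    intro H hne
    set C := Subgroup.centralizer (H : Set G) with hC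
    -- generic bound helper
    have hsmall : ∀ m c : ℕ, m ≤ 2 * nA → c ≤ nO → m * c < nA * nA := by
      intro m c hm hc
      have h1 : 3 * (m * c) ≤ 2 * nA * (3 * nO) := by
        calc 3 * (m * c) = m * (3 * c) := by ring
          _ ≤ (2 * nA) * (3 * nO) := Nat.mul_le_mul hm (Nat.mul_le_mul_left _ hc)
      have h2 : 2 * nA * (3 * nO) ≤ 2 * nA * nA := Nat.mul_le_mul_left _ h3O
      have h3'' : 2 * nA * nA < 3 * (nA * nA) := by nlinarith
      omega
    by_cases hHA : H ≤ A
    · by_cases hout : ∃ c ∈ C, c ∉ A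
      · -- H has exponent 2; crude bound suffices
        obtain ⟨c, hc, hcA⟩ := hout
        have hHO : Nat.card H ≤ nO := by
          apply Subgroup.card_le_of_le
          intro h hh
          have h1 : c * h * c⁻¹ = h⁻¹ := hconj c hcA h (hHA hh)
          have h2 : h * c = c * h := Subgroup.mem_centralizer_iff.mp hc h hh
          have h3' : c * h * c⁻¹ = h := by rw [← h2]; group
          rw [hOm]
          refine ⟨hHA hh, ?_⟩
          rw [pow_two]
          nth_rewrite 2 [← h3']
          rw [h1]; group
        have hCG : Nat.card C ≤ 2 * nA := by
          rw [← hGA]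
          exact Nat.card_le_card_of_injective _ C.subtype_injective
        rw [cdMeasure, ← hC, Nat.mul_comm]
        exact hsmall _ _ hCG hHO
      · -- centralizer is exactly A
        push_neg at hout
        have hAC : A ≤ C := by
          intro a ha
          rw [hC, Subgroup.mem_centralizer_iff]
          intro h hh
          exact Subgroup.mul_comm_of_mem_isMulCommutative (H := A) (hHA hh) ha
        have hCA' : C = A := le_antisymm hout hAC
        have hHlt : Nat.card H < nA := by
          rcases lt_or_ge (Nat.card H) nA with h | h
          · exact h
          · exact absurd (Subgroup.eq_of_le_of_card_ge hHA h) hne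
        rw [cdMeasure, ← hC, hCA', ← hnA]
        nlinarith
    · -- H is not contained in A
      obtain ⟨g, hgH, hgA⟩ := SetLike.not_le_iff_exists.mp hHA
      have hCg : ∀ b ∈ A, b ∈ C → b ^ 2 = 1 := by
        intro b hb hbC
        have h1 : g * b * g⁻¹ = b⁻¹ := hconj g hgA b hb
        have h2 : g * b = b * g := Subgroup.mem_centralizer_iff.mp hbC g hgH
        have h3' : g * b * g⁻¹ = b := by rw [h2]; group
        rw [pow_two]
        nth_rewrite 2 [← h3']
        rw [h1]; group
      by_cases hK : ∀ k ∈ A ⊓ H, k ^ 2 = 1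
      · -- A ∩ H has exponent 2
        have hH2 : Nat.card H ≤ 2 * nO := by
          refine (hhalf H).trans (Nat.mul_le_mul_left _ ?_)
          apply Subgroup.card_le_of_le
          intro k hk
          obtain ⟨hk1, hk2'⟩ := Subgroup.mem_inf.mp hk
          rw [hOm]
          exact ⟨hk1, hK k hk⟩
        have hC2 : Nat.card C ≤ 2 * nO := by
          refine (hhalf C).trans (Nat.mul_le_mul_left _ ?_)
          apply Subgroup.card_le_of_le
          intro b hb
          obtain ⟨hbA, hbC⟩ := Subgroup.mem_inf.mp hb
          rw [hOm]
          exact ⟨hbA, hCg b hbA hbC⟩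
        have : Nat.card H * Nat.card C ≤ (2 * nO) * (2 * nO) :=
          Nat.mul_le_mul hH2 hC2
        have h9 : (3 * nO) * (3 * nO) ≤ nA * nA := Nat.mul_le_mul h3O h3O
        have h4 : 2 * nO < 3 * nO := by omega
        have h5 : (2 * nO) * (2 * nO) < (3 * nO) * (3 * nO) :=
          mul_lt_mul'' h4 h4 (Nat.zero_le _) (Nat.zero_le _)
        rw [cdMeasure, ← hC]
        exact lt_of_le_of_lt this (lt_of_lt_of_le h5 h9)
      · -- some element of A ∩ H has nontrivial square; centralizer inside Omega
        push_neg at hK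
        obtain ⟨k, hk, hk2⟩ := hK
        have hCO : Nat.card C ≤ nO := by
          apply Subgroup.card_le_of_le
          intro c hc
          have hcA : c ∈ A := by
            by_contra hcA
            apply hk2
            have h1 : c * k * c⁻¹ = k⁻¹ := hconj c hcA k (Subgroup.mem_inf.mp hk).1
            have h2 : k * c = c * k := Subgroup.mem_centralizer_iff.mp hc k (Subgroup.mem_inf.mp hk).2
            have h3' : c * k * c⁻¹ = k := by rw [← h2]; group
            rw [pow_two]
            nth_rewrite 2 [← h3']
            rw [h1]; group
          rw [hOm]
          exact ⟨hcA, hCg c hcA hc⟩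
        have hHG : Nat.card H ≤ 2 * nA := by
          rw [← hGA]
          exact Nat.card_le_card_of_injective _ H.subtype_injective
        rw [cdMeasure, ← hC]
        exact hsmall _ _ hHG hCO
  -- conclude
  ext H
  simp only [CD, Set.mem_setOf_eq, Set.mem_singleton_iff]
  constructor
  · intro hH
    by_contra hne
    have h1 : cdMeasure G A ≤ cdMeasure G H := hH A
    have h2 : cdMeasure G H < cdMeasure G A := hcdA ▸ key H hne
    exact absurd h1 (not_le.mpr h2)
  · rintro rfl
    intro K
    by_cases hK : K = H
    · rw [hK]
    · rw [hcdA]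
      exact le_of_lt (key K hK)
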